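/- Let f : M → M be a local homeomorphism of a compact metric space M such that every preorbit ⋃_{j≥0} f^{-j}(x) is dense in M, let φ : M → ℝ be continuous, and let ν be a reference measure for (f, φ), i.e. a Borel probability measure with L*_{f,φ}ν = λν for some λ > 0. Then the support of ν is all of M. -/

import Mathlib

open MeasureTheory Set Filter Topology
open scoped ENNReal NNReal

noncomputable section

namespace PaperWG

variable {X : Type*}

section Dyn

variable [MetricSpace X]

/-- The dynamical ball `B_ε(x,n) = {y : d(T^j x, T^j y) < ε for all 0 ≤ j ≤ n}`. -/
def dynBall (T : X → X) (x : X) (n : ℕ) (ε : ℝ) : Set X :=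
  {y | ∀ j ≤ n, dist (T^[j] x) (T^[j] y) < ε}

/-- Birkhoff sum `S_n φ(x) = ∑_{j=0}^{n-1} φ(T^j x)`. -/
def birkhoff (T : X → X) (φ : X → ℝ) (n : ℕ) (x : X) : ℝ :=
  ∑ j ∈ Finset.range n, φ (T^[j] x)

/-- `R_{n,ε}φ(x) = sup_{y ∈ B_ε(x,n)} S_n φ(y)`. -/
def rSup (T : X → X) (φ : X → ℝ) (n : ℕ) (ε : ℝ) (x : X) : ℝ :=
  sSup (birkhoff T φ n '' dynBall T x n ε)

/-- `m_T(φ,Λ,ε,N,γ)`: infimum over countable covers of `Λ` by dynamical balls with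
time at least `N` of `∑ exp(-γ n + R_{n,ε}φ(x))`. -/
def mPre (T : X → X) (φ : X → ℝ) (Λ : Set X) (ε : ℝ) (N : ℕ) (γ : ℝ) : ℝ≥0∞ :=
  ⨅ (U : Set (X × ℕ)) (_ : U.Countable) (_ : ∀ p ∈ U, N ≤ p.2)
    (_ : Λ ⊆ ⋃ p ∈ U, dynBall T p.1 p.2 ε),
    ∑' p : U, ENNReal.ofReal (Real.exp (-γ * (p.1.2 : ℝ) + rSup T φ p.1.2 ε p.1.1))

/-- `m_T(φ,Λ,ε,γ) = lim_{N→∞} m_T(φ,Λ,ε,N,γ)`; the quantity is nondecreasing in `N`,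
so the limit is the supremum. -/
def mRel (T : X → X) (φ : X → ℝ) (Λ : Set X) (ε γ : ℝ) : ℝ≥0∞ :=
  ⨆ N : ℕ, mPre T φ Λ ε N γ

/-- `P_T(φ,Λ,ε) = inf {γ : m_T(φ,Λ,ε,γ) = 0}`. -/
def presRelEps (T : X → X) (φ : X → ℝ) (Λ : Set X) (ε : ℝ) : ℝ :=
  sInf {γ : ℝ | mRel T φ Λ ε γ = 0}

/-- The relative topological pressure `P_T(φ,Λ) = lim_{ε→0} P_T(φ,Λ,ε)`; the quantity is
nonincreasing in `ε`, so the limit is the supremum over `ε > 0`. -/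
def presRel (T : X → X) (φ : X → ℝ) (Λ : Set X) : ℝ :=
  ⨆ ε : {e : ℝ // 0 < e}, presRelEps T φ Λ ε.1

/-- The topological pressure `P_T(φ) = P_T(φ, X)`. -/
def pres (T : X → X) (φ : X → ℝ) : ℝ :=
  presRel T φ Set.univ

/-- `g` maps `A` homeomorphically onto `B`. -/
def MapsHomeomorphicallyOnto (g : X → X) (A B : Set X) : Prop :=
  g '' A = B ∧ ∃ e : A ≃ₜ B, ∀ a : A, (e a : X) = g a

/-- Condition (*): `n ≥ 1` is a Gibbs time for `x` when `f^n` maps the dynamical ball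
`B_ε(x,n)` homeomorphically onto the ball `B(f^n x, ε)` for every `0 < ε < δ₀`. -/
def IsGibbsTime (f : X → X) (δ₀ : ℝ) (x : X) (n : ℕ) : Prop :=
  1 ≤ n ∧ ∀ ε : ℝ, 0 < ε → ε < δ₀ →
    MapsHomeomorphicallyOnto (f^[n]) (dynBall f x n ε) (Metric.ball (f^[n] x) ε)

/-- The set `G` of Hypothesis (H1): points whose frequency of Gibbs times is at least `θ`. -/
def gibbsSet (f : X → X) (δ₀ θ : ℝ) : Set X :=
  {x | θ ≤ Filter.atTop.limsup
    (fun n : ℕ => ((Set.Icc 1 n ∩ {j | IsGibbsTime f δ₀ x j}).ncard : ℝ) / n)}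

/-- Every preorbit `⋃_{j≥0} f^{-j}(x)` is dense. -/
def DensePreorbits (f : X → X) : Prop :=
  ∀ x : X, Dense (⋃ n : ℕ, f^[n] ⁻¹' {x})

/-- Hypothesis (H2): Bowen property of `φ` on `G` at Gibbs times. -/
def BowenOnGibbs (f : X → X) (φ : X → ℝ) (δ₀ : ℝ) (G : Set X) : Prop :=
  ∃ V > 0, ∃ ε > 0, ∀ x ∈ G, ∀ n : ℕ, IsGibbsTime f δ₀ x n →
    ∀ y ∈ dynBall f x n ε, ∀ z ∈ dynBall f x n ε,
      |∑ i ∈ Finset.range (n + 1), (φ (f^[i] y) - φ (f^[i] z))| ≤ V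

/-- Bowen property of `φ` on a set `S` at all times (Hypothesis (H4)). -/
def BowenOn (T : X → X) (φ : X → ℝ) (S : Set X) : Prop :=
  ∃ ε > 0, ∃ V > 0, ∀ x ∈ S, ∀ n : ℕ,
    ∀ y ∈ dynBall T x n ε, ∀ z ∈ dynBall T x n ε,
      |∑ j ∈ Finset.range (n + 1), (φ (T^[j] y) - φ (T^[j] z))| ≤ V

/-- Hypotheses (H3)/(H5): the topological pressure is located on `S`:
`P_T(φ, Sᶜ) < P_T(φ, S) = P_T(φ)`. -/
def PressureLocatedOn (T : X → X) (φ : X → ℝ) (S : Set X) : Prop :=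
  presRel T φ Sᶜ < presRel T φ S ∧ presRel T φ S = pres T φ

end Dyn

section Meas

variable [MetricSpace X] [MeasurableSpace X]

/-- `μ` is a weak Gibbs measure for `(T,φ)` with constant `P`. -/
def IsWeakGibbs (T : X → X) (φ : X → ℝ) (μ : Measure X) (P : ℝ) : Prop :=
  ∃ δ > 0, ∀ ε : ℝ, 0 < ε → ε ≤ δ → ∃ K > 0,
    ∀ᵐ x ∂μ, ∃ nk : ℕ → ℕ, StrictMono nk ∧
      ∀ k : ℕ, ∀ y ∈ dynBall T x (nk k) ε,
        ENNReal.ofReal (K⁻¹ * Real.exp (birkhoff T φ (nk k) y - (nk k : ℝ) * P))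
            ≤ μ (dynBall T x (nk k) ε) ∧
          μ (dynBall T x (nk k) ε)
            ≤ ENNReal.ofReal (K * Real.exp (birkhoff T φ (nk k) y - (nk k : ℝ) * P))

/-- The Ruelle–Perron–Frobenius transfer operator
`L_{f,φ} ψ (x) = ∑_{y ∈ f⁻¹(x)} e^{φ(y)} ψ(y)`. -/
def transferOp (f : X → X) (φ ψ : X → ℝ) (x : X) : ℝ :=
  ∑' y : (f ⁻¹' {x} : Set X), Real.exp (φ y) * ψ y

/-- A reference measure for `(f,φ)`: a Borel probability measure `ν` with
`L*_{f,φ} ν = λ ν`. -/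
def IsReferenceMeasure (f : X → X) (φ : X → ℝ) (ν : Measure X) (lam : ℝ) : Prop :=
  IsProbabilityMeasure ν ∧ 0 < lam ∧
    ∀ ψ : X → ℝ, Continuous ψ →
      ∫ x, transferOp f φ ψ x ∂ν = lam * ∫ x, ψ x ∂ν

end Meas

section Entropy

variable [MeasurableSpace X]

/-- Entropy of the finite partition of `X` by the fibers of `P`. -/
def partEntropy (μ : Measure X) {α : Type} [Fintype α] (P : X → α) : ℝ :=
  ∑ a : α, Real.negMulLog ((μ (P ⁻¹' {a})).toReal)

/-- Kolmogorov–Sinai entropy of `μ` with respect to the partition given by `P`. -/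
def entropyWrt (T : X → X) (μ : Measure X) {k : ℕ} (P : X → Fin k) : ℝ :=
  Filter.atTop.liminf fun n : ℕ =>
    partEntropy μ (fun x => fun j : Fin n => P (T^[(j : ℕ)] x)) / n

/-- Kolmogorov–Sinai (metric) entropy of `μ`: supremum over finite measurable
partitions of the entropy of `T` with respect to the partition. -/
def metricEntropy (T : X → X) (μ : Measure X) : ℝ :=
  ⨆ p : Σ k : ℕ, {P : X → Fin k // Measurable P}, entropyWrt T μ p.2.1

end Entropy

section Equi

variable [MetricSpace X] [MeasurableSpace X]

/-- `μ` is an equilibrium state for `(T,φ)`: it is `T`-invariant and attains the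
supremum of `η ↦ h_η(T) + ∫ φ dη` over all `T`-invariant Borel probability measures. -/
def IsEquilibriumState (T : X → X) (φ : X → ℝ) (μ : Measure X) : Prop :=
  IsProbabilityMeasure μ ∧ Measure.map T μ = μ ∧
    ∀ η : Measure X, IsProbabilityMeasure η → Measure.map T η = η →
      metricEntropy T η + ∫ x, φ x ∂η ≤ metricEntropy T μ + ∫ x, φ x ∂μ

/-- A generating partition for `G`: a countable measurable partition of `G` with finite
entropy whose iterates under `f` generate the Borel σ-algebra of `G` (in the sense that
every measurable set agrees on `G` with a set in the σ-algebra generated by the cylinders). -/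
structure GeneratingPartition (f : X → X) (G : Set X) : Type _ where
  part : ℕ → Set X
  measurable : ∀ i, MeasurableSet (part i)
  disj : Pairwise (Function.onFun Disjoint part)
  cover : G = ⋃ i, part i
  finiteEntropy : ∀ μ : Measure X, IsProbabilityMeasure μ →
    Summable fun i => Real.negMulLog ((μ (part i)).toReal)
  generates : ∀ B : Set X, MeasurableSet B →
    ∃ B' : Set X,
      MeasurableSet[MeasurableSpace.generateFrom
        {s : Set X | ∃ (n : ℕ) (a : Fin n → ℕ), s = ⋂ j : Fin n, f^[(j : ℕ)] ⁻¹' part (a j)}] B' ∧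
      B ∩ G = B' ∩ G

end Equi

end PaperWG

namespace PaperWG

section Aux

variable {M : Type*} [MetricSpace M] [CompactSpace M]

lemma fiber_finite {f : M → M} (hf : IsLocalHomeomorph f) (x : M) :
    (f ⁻¹' {x}).Finite := by
  choose E hmem hfe using fun y => hf y
  have hFc : IsCompact (f ⁻¹' {x}) := (isClosed_singleton.preimage hf.continuous).isCompact
  obtain ⟨b, hb, hbfin, hcover⟩ := hFc.elim_finite_subcover_image
    (fun y (_ : y ∈ f ⁻¹' {x}) => (E y).open_source)
    (fun z hz => Set.mem_biUnion hz (hmem z))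
  refine hbfin.subset fun z hz => ?_
  obtain ⟨y, hy, hzy⟩ := Set.mem_iUnion₂.mp (hcover hz)
  have hinj : Set.InjOn f (E y).source := by rw [hfe y]; exact (E y).injOn
  have hzyq : z = y := hinj hzy (hmem y) (by
    have h1 : f z = x := hz
    have h2 : f y = x := hb hy
    rw [h1, h2])
  rwa [hzyq]

lemma transferOp_sum {f : M → M} (φ ψ : M → ℝ) {x : M} {s : Finset M}
    (hs : f ⁻¹' {x} = ↑s) :
    transferOp f φ ψ x = ∑ y ∈ s, Real.exp (φ y) * ψ y := by
  rw [transferOp, hs]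
  exact Finset.tsum_subtype' s fun y => Real.exp (φ y) * ψ y

lemma transferOp_nonneg {f : M → M} (φ g : M → ℝ) (hg : ∀ z, 0 ≤ g z) (x : M) :
    0 ≤ transferOp f φ g x :=
  tsum_nonneg fun y => mul_nonneg (Real.exp_pos _).le (hg y)

lemma transferOp_pos {f : M → M} (hf : IsLocalHomeomorph f) (φ g : M → ℝ)
    (hg : ∀ z, 0 ≤ g z) {x y : M} (hy : f y = x) (hgy : 0 < g y) :
    0 < transferOp f φ g x := by
  have hfin := fiber_finite hf x
  rw [transferOp_sum φ g hfin.coe_toFinset.symm]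
  refine Finset.sum_pos' (fun z _ => mul_nonneg (Real.exp_pos _).le (hg z))
    ⟨y, ?_, mul_pos (Real.exp_pos _) hgy⟩
  simp [Set.Finite.mem_toFinset, hy]

lemma transferOp_continuous {f : M → M} (hf : IsLocalHomeomorph f)
    {φ ψ : M → ℝ} (hφ : Continuous φ) (hψ : Continuous ψ) :
    Continuous (transferOp f φ ψ) := by
  classical
  choose E hmem hfe using fun y => hf y
  rw [continuous_iff_continuousAt]
  intro x
  have hfin := fiber_finite hf x
  set F : Finset M := hfin.toFinset with hF
  have hmemF : ∀ y, y ∈ F ↔ f y = x := by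
    intro y; simp [hF, Set.Finite.mem_toFinset]
  obtain ⟨r, hr, hsep⟩ : ∃ r > 0, ∀ y ∈ F, ∀ y' ∈ F, y ≠ y' →
      Disjoint (Metric.ball y r) (Metric.ball y' r) := by
    set D : Finset ℝ := ((F ×ˢ F).filter fun p => p.1 ≠ p.2).image
      (fun p => dist p.1 p.2) with hD
    rcases D.eq_empty_or_nonempty with hDe | hDne
    · refine ⟨1, one_pos, fun y hy y' hy' hne => absurd ?_ (by simp [hDe] : dist y y' ∉ D)⟩
      exact Finset.mem_image.mpr ⟨(y, y'),
        Finset.mem_filter.mpr ⟨Finset.mem_product.mpr ⟨hy, hy'⟩, hne⟩, rfl⟩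
    · have hminpos : 0 < D.min' hDne := by
        obtain ⟨p, hp, hpd⟩ := Finset.mem_image.mp (D.min'_mem hDne)
        rw [← hpd]
        exact dist_pos.mpr (Finset.mem_filter.mp hp).2
      refine ⟨D.min' hDne / 2, half_pos hminpos, fun y hy y' hy' hne => ?_⟩
      have hdm : D.min' hDne ≤ dist y y' := Finset.min'_le _ _
        (Finset.mem_image.mpr ⟨(y, y'),
          Finset.mem_filter.mpr ⟨Finset.mem_product.mpr ⟨hy, hy'⟩, hne⟩, rfl⟩)
      exact Metric.ball_disjoint_ball (by linarith)
  set E' : M → OpenPartialHomeomorph M M :=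
    fun y => (E y).restrOpen (Metric.ball y r) Metric.isOpen_ball with hE'
  have hcoe : ∀ y z, (E' y) z = f z := fun y z => by rw [hfe y]; rfl
  have hsrc : ∀ y, (E' y).source = (E y).source ∩ Metric.ball y r :=
    fun y => (E y).restrOpen_source _ _
  have hmem' : ∀ y ∈ F, y ∈ (E' y).source := fun y hy => by
    rw [hsrc]; exact ⟨hmem y, Metric.mem_ball_self hr⟩
  have hxt : ∀ y ∈ F, x ∈ (E' y).target := fun y hy => by
    have h := (E' y).map_source (hmem' y hy)
    rwa [hcoe y y, (hmemF y).mp hy] at h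
  set V : Set M := ⋃ y ∈ F, (E' y).source with hV
  set W : Set M := (⋂ y ∈ F, (E' y).target) \ (f '' Vᶜ) with hW
  have hWo : IsOpen W := by
    refine IsOpen.sdiff (isOpen_biInter_finset fun y _ => (E' y).open_target) ?_
    exact (((isOpen_biUnion fun y (_ : y ∈ F) =>
      (E' y).open_source).isClosed_compl.isCompact).image hf.continuous).isClosed
  have hxW : x ∈ W := by
    constructor
    · exact Set.mem_iInter₂.mpr hxt
    · rintro ⟨z, hz, rfl⟩
      exact hz (Set.mem_biUnion ((hmemF z).mpr rfl) (hmem' z ((hmemF z).mpr rfl)))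
  have hfiber : ∀ x' ∈ W, f ⁻¹' {x'} = ↑(F.image fun y => (E' y).symm x') := by
    intro x' hx'
    ext z
    simp only [Set.mem_preimage, Set.mem_singleton_iff, Finset.coe_image, Set.mem_image,
      Finset.mem_coe]
    constructor
    · intro hz
      have hzV : z ∈ V := by
        by_contra hzV
        exact hx'.2 ⟨z, hzV, hz⟩
      obtain ⟨y, hy, hzy⟩ := Set.mem_iUnion₂.mp hzV
      refine ⟨y, hy, ?_⟩
      have h := (E' y).left_inv hzy
      rwa [hcoe y z, hz] at h
    · rintro ⟨y, hy, rfl⟩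
      have hx't : x' ∈ (E' y).target := Set.mem_iInter₂.mp hx'.1 y hy
      rw [← hcoe y ((E' y).symm x')]
      exact (E' y).right_inv hx't
  have hinj : ∀ x' ∈ W, Set.InjOn (fun y => (E' y).symm x') ↑F := by
    intro x' hx' y hy y' hy' hEq
    by_contra hne
    have h1 : (E' y).symm x' ∈ Metric.ball y r := by
      have h := (E' y).map_target (Set.mem_iInter₂.mp hx'.1 y hy)
      rw [hsrc] at h; exact h.2
    have h2 : (E' y').symm x' ∈ Metric.ball y' r := by
      have h := (E' y').map_target (Set.mem_iInter₂.mp hx'.1 y' hy')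
      rw [hsrc] at h; exact h.2
    exact (hsep y hy y' hy' hne).ne_of_mem h1 h2 hEq
  have hEqOn : ∀ x' ∈ W, transferOp f φ ψ x'
      = ∑ y ∈ F, Real.exp (φ ((E' y).symm x')) * ψ ((E' y).symm x') := by
    intro x' hx'
    rw [transferOp_sum φ ψ (hfiber x' hx')]
    exact Finset.sum_image fun y hy y' hy' h =>
      hinj x' hx' (Finset.mem_coe.mpr hy) (Finset.mem_coe.mpr hy') h
  have hG : ContinuousAt
      (fun x' => ∑ y ∈ F, Real.exp (φ ((E' y).symm x')) * ψ ((E' y).symm x')) x := by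
    apply tendsto_finset_sum
    intro y hy
    have hsymc : ContinuousAt (E' y).symm x :=
      (E' y).symm.continuousAt (by rw [OpenPartialHomeomorph.symm_source]; exact hxt y hy)
    exact ((Real.continuous_exp.comp hφ).continuousAt.comp hsymc).mul
      (hψ.continuousAt.comp hsymc)
  exact hG.congr (Filter.eventuallyEq_of_mem (hWo.mem_nhds hxW)
    fun x' hx' => (hEqOn x' hx').symm)

end Aux


/-- The reference measure has full support: every nonempty open set has positive
measure. -/
theorem referenceMeasure_fullSupport
    {M : Type*} [MetricSpace M] [CompactSpace M] [MeasurableSpace M] [BorelSpace M]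
    (f : M → M) (hf : IsLocalHomeomorph f) (hdense : DensePreorbits f)
    (φ : M → ℝ) (hφ : Continuous φ)
    (ν : Measure M) (lam : ℝ) (href : IsReferenceMeasure f φ ν lam) :
    ∀ U : Set M, IsOpen U → U.Nonempty → 0 < ν U := by
  obtain ⟨hprob, hlam, hL⟩ := href
  haveI := hprob
  intro U hU hUne
  by_contra hpos
  have hU0 : ν U = 0 := by
    simpa [pos_iff_ne_zero, not_not] using hpos
  obtain ⟨u, hu⟩ := hUne
  obtain ⟨ε, hε, hball⟩ := Metric.isOpen_iff.mp hU u hu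
  set ψ : M → ℝ := fun z => max (1 - dist z u / ε) 0 with hψdef
  have hψc : Continuous ψ :=
    (continuous_const.sub ((continuous_id.dist continuous_const).div_const ε)).max
      continuous_const
  have hψnn : ∀ z, 0 ≤ ψ z := fun z => le_max_right _ _
  have hψpos : ∀ z, dist z u < ε → 0 < ψ z := fun z hz =>
    lt_max_iff.mpr (Or.inl (sub_pos.mpr ((div_lt_one hε).mpr hz)))
  have hψsupp : ∀ z, ψ z ≠ 0 → z ∈ U := by
    intro z hz
    apply hball
    rw [Metric.mem_ball]
    by_contra hd
    push_neg at hd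
    apply hz
    have h1 : 1 - dist z u / ε ≤ 0 := by
      rw [sub_nonpos]
      exact (one_le_div hε).mpr hd
    simp [hψdef, max_eq_right h1]
  have hψae : ψ =ᵐ[ν] (fun _ => 0) := by
    rw [Filter.EventuallyEq, MeasureTheory.ae_iff]
    exact measure_mono_null (fun z hz => hψsupp z hz) hU0
  have hψint : ∫ z, ψ z ∂ν = 0 := by
    rw [integral_congr_ae hψae, integral_zero]
  set L : (M → ℝ) → (M → ℝ) := fun g => transferOp f φ g with hLdef
  set Ln : ℕ → M → ℝ := fun n => L^[n] ψ with hLn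
  have hLsucc : ∀ n, Ln (n + 1) = transferOp f φ (Ln n) := fun n =>
    Function.iterate_succ_apply' L n ψ
  have hLcont : ∀ n, Continuous (Ln n) := by
    intro n; induction n with
    | zero => simpa [hLn] using hψc
    | succ n ih => rw [hLsucc]; exact transferOp_continuous hf hφ ih
  have hLnn : ∀ n, ∀ z, 0 ≤ Ln n z := by
    intro n; induction n with
    | zero => simpa [hLn] using hψnn
    | succ n ih => intro z; rw [hLsucc]; exact transferOp_nonneg _ _ ih z
  have hLint : ∀ n, ∫ z, Ln n z ∂ν = 0 := by
    intro n; induction n with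
    | zero => simpa [hLn] using hψint
    | succ n ih =>
      rw [hLsucc, hL (Ln n) (hLcont n), ih, mul_zero]
  have hLpos : ∀ n, ∀ y z : M, f^[n] y = z → 0 < ψ y → 0 < Ln n z := by
    intro n
    induction n with
    | zero =>
      intro y z h hy
      have : y = z := h
      rw [hLn]
      simpa [← this] using hy
    | succ n ih =>
      intro y z h hy
      rw [hLsucc]
      refine transferOp_pos hf φ (Ln n) (hLnn n) (x := z) (y := f^[n] y) ?_
        (ih y _ rfl hy)
      rw [← Function.iterate_succ_apply' f n y]
      exact h
  have hx0 : ∃ x0 : M, ∀ W : Set M, IsOpen W → x0 ∈ W → 0 < ν W := by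
    by_contra hc
    push_neg at hc
    choose W hWo hWx hW0 using hc
    obtain ⟨t, ht⟩ := isCompact_univ.elim_finite_subcover W hWo
      (fun z _ => Set.mem_iUnion.mpr ⟨z, hWx z⟩)
    have h0 : ν (⋃ i ∈ t, W i) = 0 :=
      (measure_biUnion_null_iff t.countable_toSet).mpr fun i _ =>
        le_antisymm (hW0 i) zero_le
    have huniv : ν Set.univ = 0 := measure_mono_null ht h0
    simp [measure_univ] at huniv
  obtain ⟨x0, hx0⟩ := hx0
  obtain ⟨y, hy, hyb⟩ := (hdense x0).exists_mem_open Metric.isOpen_ball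
    ⟨u, Metric.mem_ball_self hε⟩
  obtain ⟨n, hn⟩ := Set.mem_iUnion.mp hy
  have hψy : 0 < ψ y := hψpos y (Metric.mem_ball.mp hyb)
  have hpos0 : 0 < Ln n x0 := hLpos n y x0 (by simpa using hn) hψy
  have hWopen : IsOpen {z | 0 < Ln n z} := isOpen_lt continuous_const (hLcont n)
  have hWpos : 0 < ν {z | 0 < Ln n z} := hx0 _ hWopen hpos0
  have hInt : MeasureTheory.Integrable (Ln n) ν :=
    (hLcont n).integrable_of_hasCompactSupport
      (IsCompact.of_isClosed_subset isCompact_univ (isClosed_tsupport _) (Set.subset_univ _))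
  have hae : Ln n =ᵐ[ν] 0 :=
    (MeasureTheory.integral_eq_zero_iff_of_nonneg (fun z => hLnn n z) hInt).mp (hLint n)
  have hzero : ν {z | 0 < Ln n z} = 0 :=
    measure_mono_null (fun z hz => by simpa using ne_of_gt hz) (MeasureTheory.ae_iff.mp hae)
  exact hWpos.ne' hzero

end PaperWG
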